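/- Let R be a commutative ring, α a finite type with decidable equality, and σ a permutation of α with permutation matrix P_σ over R (so (P_σ)_{ij} = 1 if σ(j) = i and 0 otherwise). Then in the polynomial ring R[X] one has det(I − X·P_σ) = (1 − X)^{f} · ∏_{ℓ ∈ cycleType(σ)} (1 − X^{ℓ}), where f is the number of fixed points of σ and the product runs over the multiset of cycle lengths of σ. Equivalently, for a permutation with cycle shape 1^{a₁}2^{a₂}⋯N^{a_N}, det(I − X·P_σ) = ∏_{j=1}^{N} (1 − X^{j})^{a_j}. -/

import Mathlib

open Polynomial Matrix Equiv Finset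

section PermDet

variable {R : Type*} [CommRing R]

/-- The matrix `1 - X • P_σ` for a permutation `σ`. -/
noncomputable def permPolyMat (R : Type*) [CommRing R] {β : Type*} [Fintype β] [DecidableEq β]
    (σ : Equiv.Perm β) : Matrix β β R[X] :=
  (1 : Matrix β β R[X]) - (X : R[X]) • Matrix.of (fun i j => if σ j = i then (1 : R[X]) else 0)

lemma permPolyMat_apply {β : Type*} [Fintype β] [DecidableEq β] (σ : Equiv.Perm β) (i j : β) :
    permPolyMat R σ i j =
      (if i = j then (1 : R[X]) else 0) - X * (if σ j = i then 1 else 0) := by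
  simp [permPolyMat, Matrix.one_apply, Matrix.sub_apply]

lemma permPolyMat_one {β : Type*} [Fintype β] [DecidableEq β] :
    (permPolyMat R (1 : Equiv.Perm β)).det = (1 - (X : R[X])) ^ Fintype.card β := by
  have h : permPolyMat R (1 : Equiv.Perm β) = Matrix.diagonal (fun _ => 1 - (X : R[X])) := by
    ext i j
    rw [permPolyMat_apply]
    rcases eq_or_ne i j with rfl | hij
    · simp
    · simp [Matrix.diagonal_apply_ne _ hij, hij, Ne.symm hij]
  rw [h, Matrix.det_diagonal]
  simp [Finset.card_univ]

lemma permPolyMat_cycle {β : Type*} [Fintype β] [DecidableEq β] (c : Equiv.Perm β)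
    (hc : c.IsCycle) (hfix : ∀ x, c x ≠ x) :
    (permPolyMat R c).det = 1 - (X : R[X]) ^ Fintype.card β := by
  classical
  have h1c : (1 : Equiv.Perm β) ≠ c := by
    obtain ⟨x, hx, -⟩ := hc
    intro h; exact hx (by rw [← h]; rfl)
  rw [Matrix.det_apply]
  rw [← Finset.sum_subset (Finset.subset_univ ({1, c} : Finset (Equiv.Perm β)))]
  · rw [Finset.sum_pair h1c]
    have ht1 : ∏ i, permPolyMat R (c) (((1 : Equiv.Perm β)) i) i = 1 := by
      rw [Finset.prod_eq_one]
      intro i _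
      rw [permPolyMat_apply]
      simp [hfix i]
    have htc : ∏ i, permPolyMat R c (c i) i = (-X : R[X]) ^ Fintype.card β := by
      rw [Finset.prod_congr rfl (fun i _ => ?_), Finset.prod_const, Finset.card_univ]
      rw [permPolyMat_apply]
      simp [hfix i, (hfix i).symm]
    have hsupp : c.support = Finset.univ := by
      ext x; simp [Equiv.Perm.mem_support, hfix x]
    have hsign : Equiv.Perm.sign c = -(-1) ^ Fintype.card β := by
      rw [hc.sign, hsupp, Finset.card_univ]
    rw [ht1, htc, Equiv.Perm.sign_one, hsign, one_smul, Units.smul_def]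
    have hcast : ((-(-1) ^ Fintype.card β : ℤˣ) : ℤ) = -(-1 : ℤ) ^ Fintype.card β := by
      push_cast; ring
    rw [hcast, zsmul_eq_mul]
    push_cast
    rw [neg_pow (X : R[X]), ← mul_assoc, neg_mul, ← mul_pow]
    norm_num
    ring
  · intro τ _ hτ
    have key : ∃ j, τ j ≠ j ∧ τ j ≠ c j := by
      by_contra hcon
      push_neg at hcon
      have hd : ∀ j, τ j = j ∨ τ j = c j := by
        intro j; by_cases h : τ j = j
        · exact Or.inl h
        · exact Or.inr (hcon j h)
      rcases Classical.em (∀ j, τ j = j) with hall | hnot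
      · exact hτ (by simp only [Finset.mem_insert]; exact Or.inl (Equiv.ext fun j => (hall j).trans rfl))
      · push_neg at hnot
        obtain ⟨j₀, hj₀⟩ := hnot
        have hj₀c : τ j₀ = c j₀ := (hd j₀).resolve_left hj₀
        have step : ∀ z, τ z = c z → τ (c z) = c (c z) := by
          intro z hz
          rcases hd (c z) with h | h
          · exfalso
            have h2 : τ (c z) = τ z := by rw [h, hz]
            exact hfix z (τ.injective h2)
          · exact h
        have iter : ∀ m : ℕ, τ ((c ^ m) j₀) = c ((c ^ m) j₀) := by
          intro m
          induction m with
          | zero => simpa using hj₀c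
          | succ n ih =>
            rw [pow_succ']
            simpa [Equiv.Perm.mul_apply] using step _ ih
        have : τ = c := by
          ext y
          obtain ⟨m, hm⟩ := hc.exists_pow_eq (hfix j₀) (hfix y)
          rw [← hm]; exact iter m
        exact hτ (by simp [this])
    obtain ⟨j, hj1, hj2⟩ := key
    have hz : permPolyMat R c (τ j) j = 0 := by
      rw [permPolyMat_apply, if_neg hj1, if_neg (fun h : c j = τ j => hj2 h.symm)]
      ring
    rw [show (∏ i, permPolyMat R c (τ i) i) = 0 from
      Finset.prod_eq_zero (Finset.mem_univ j) hz, smul_zero]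

lemma permPolyMat_split {β : Type*} [Fintype β] [DecidableEq β] (σ : Equiv.Perm β)
    (p : β → Prop) [DecidablePred p] (h : ∀ x, p x ↔ p (σ x)) :
    (permPolyMat R σ).det =
      (permPolyMat R (σ.subtypePerm (fun x => (h x).symm) : Equiv.Perm {x // p x})).det *
      (permPolyMat R (σ.subtypePerm (fun x => not_iff_not.mpr (h x).symm) :
        Equiv.Perm {x // ¬ p x})).det := by
  classical
  have hsub : (permPolyMat R σ).submatrix (Equiv.sumCompl p) (Equiv.sumCompl p) =
      Matrix.fromBlocks (permPolyMat R (σ.subtypePerm (fun x => (h x).symm))) 0 0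
        (permPolyMat R (σ.subtypePerm (fun x => not_iff_not.mpr (h x).symm))) := by
    refine Matrix.ext fun i j => ?_
    rcases i with i | i <;> rcases j with j | j
    · simp only [Matrix.submatrix_apply, Matrix.fromBlocks_apply₁₁]
      rw [permPolyMat_apply, permPolyMat_apply]
      simp only [Equiv.sumCompl_apply_inl, Subtype.ext_iff, Equiv.Perm.subtypePerm_apply]
      congr
    · simp only [Matrix.submatrix_apply, Matrix.fromBlocks_apply₁₂, Matrix.zero_apply]
      rw [permPolyMat_apply]
      simp only [Equiv.sumCompl_apply_inl, Equiv.sumCompl_apply_inr]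
      have h1 : (i : β) ≠ (j : β) := fun hij => j.2 (hij ▸ i.2)
      have h2 : σ (j : β) ≠ (i : β) := fun hij => j.2 ((h j).mpr (hij ▸ i.2))
      simp only [h1, h2, ↓reduceIte]
      ring
    · simp only [Matrix.submatrix_apply, Matrix.fromBlocks_apply₂₁, Matrix.zero_apply]
      rw [permPolyMat_apply]
      simp only [Equiv.sumCompl_apply_inl, Equiv.sumCompl_apply_inr]
      have h1 : (i : β) ≠ (j : β) := fun hij => i.2 (hij ▸ j.2)
      have h2 : σ (j : β) ≠ (i : β) := fun hij => i.2 (hij ▸ (h j).mp j.2)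
      simp only [h1, h2, ↓reduceIte]
      ring
    · simp only [Matrix.submatrix_apply, Matrix.fromBlocks_apply₂₂]
      rw [permPolyMat_apply, permPolyMat_apply]
      simp only [Equiv.sumCompl_apply_inr, Subtype.ext_iff, Equiv.Perm.subtypePerm_apply]
      congr
  rw [← Matrix.det_submatrix_equiv_self (Equiv.sumCompl p), hsub, Matrix.det_fromBlocks_zero₁₂]

lemma cancel_one_sub_X_pow (m : ℕ) {a b : R[X]} (hab : a * (1 - X) ^ m = b * (1 - X) ^ m) :
    a = b := by
  have hmon : ((X - 1 : R[X]) ^ m).Monic := (monic_X_sub_C (1 : R)).pow m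
  have hb : ((-1 : R[X]) * (X - 1)) = 1 - X := by ring
  have h2 : (a * (-1 : R[X]) ^ m) * (X - 1) ^ m = (b * (-1 : R[X]) ^ m) * (X - 1) ^ m := by
    rw [mul_assoc, mul_assoc, ← mul_pow, hb]
    exact hab
  have h3 := hmon.isRegular.right h2
  have h4 := congrArg (fun y => y * (-1 : R[X]) ^ m) h3
  simpa [mul_assoc, ← mul_pow] using h4

lemma fixed_card {β : Type*} [Fintype β] [DecidableEq β] (σ : Equiv.Perm β) :
    (Finset.univ.filter fun x : β => σ x = x).card = Fintype.card β - σ.support.card := by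
  classical
  have hsupp : σ.support = Finset.univ.filter fun x : β => ¬ σ x = x := by
    ext x; simp [Equiv.Perm.mem_support]
  have h := Finset.card_filter_add_card_filter_not
    (s := (Finset.univ : Finset β)) (p := fun x : β => σ x = x)
  rw [Finset.card_univ] at h
  rw [hsupp]
  omega

lemma key_det {β : Type*} [Fintype β] [DecidableEq β] (σ : Equiv.Perm β) :
    (permPolyMat R σ).det =
      (1 - (X : R[X])) ^ (Finset.univ.filter fun x : β => σ x = x).card *
        (σ.cycleType.map fun ℓ => (1 : R[X]) - X ^ ℓ).prod := by
  classical
  induction σ using Equiv.Perm.cycle_induction_on with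
  | base_one =>
    rw [permPolyMat_one]
    simp [Finset.card_univ]
  | base_cycles c hc =>
    have h : ∀ x, (c x ≠ x) ↔ (c (c x) ≠ c x) := by
      intro x
      constructor
      · intro hx hcx; exact hx (c.injective hcx)
      · intro hx hcx; exact hx (by rw [hcx, hcx])
    have hdet := permPolyMat_split (R := R) c (fun x => c x ≠ x) h
    -- complement part is the identity
    have e3 : (c.subtypePerm (fun x => not_iff_not.mpr (h x).symm) :
        Equiv.Perm {x // ¬ c x ≠ x}) = 1 := by
      ext x
      exact not_not.mp x.2
    -- support part is a fixed-point-free cycle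
    have hcOn : c.IsCycleOn {x | c x ≠ x} := hc.isCycleOn
    have hnt : ({x | c x ≠ x} : Set β).Nontrivial := by
      obtain ⟨a, ha, -⟩ := hc
      refine ⟨a, ha, c a, ?_, (Ne.symm ha)⟩
      intro hca
      exact ha (c.injective hca)
    have hcyc : (c.subtypePerm (fun x => (h x).symm) : Equiv.Perm {x // c x ≠ x}).IsCycle := by
      have := hcOn.isCycle_subtypePerm hnt
      convert this using 2
    have hfix : ∀ x : {x // c x ≠ x}, (c.subtypePerm (fun x => (h x).symm)) x ≠ x := by
      intro x hx
      exact x.2 (congrArg Subtype.val hx)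
    have hcard : Fintype.card {x // c x ≠ x} = c.support.card := by
      have hfs : (Finset.univ.filter fun x => c x ≠ x) = c.support := by
        ext x; simp [Equiv.Perm.mem_support]
      rw [Fintype.card_subtype, hfs]
    have hcard' : Fintype.card {x // ¬ c x ≠ x} = Fintype.card β - c.support.card := by
      rw [Fintype.card_subtype_compl, hcard]
    rw [hdet, permPolyMat_cycle _ hcyc hfix, e3, permPolyMat_one, hcard, hcard',
      fixed_card, hc.cycleType]
    simp [mul_comm]
  | induction_disjoint σ τ hdisj hσc ihσ ihτ =>
    have hd : ∀ x, σ x = x ∨ τ x = x := hdisj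
    have hτp : ∀ x, σ x ≠ x → τ x = x := fun x hx => (hd x).resolve_left hx
    have hστ' : ∀ x, τ x ≠ x → σ (τ x) = τ x := by
      intro x hx
      rcases hd (τ x) with h | h
      · exact h
      · exact absurd (τ.injective h) hx
    have hinvσ : ∀ x, (σ x ≠ x) ↔ (σ (σ x) ≠ σ x) := by
      intro x
      constructor
      · intro hx hcx; exact hx (σ.injective hcx)
      · intro hx hcx; exact hx (by rw [hcx, hcx])
    have hinvτ : ∀ x, (σ x ≠ x) ↔ (σ (τ x) ≠ τ x) := by
      intro x
      by_cases hτx : τ x = x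
      · rw [hτx]
      · have h1 : σ x = x := (hd x).resolve_right hτx
        simp [h1, hστ' x hτx]
    have hinvστ : ∀ x, (σ x ≠ x) ↔ (σ ((σ * τ) x) ≠ (σ * τ) x) := by
      intro x
      rw [hinvτ x]
      exact hinvσ (τ x)
    have e1 : ((σ * τ).subtypePerm (fun x => (hinvστ x).symm) : Equiv.Perm {x // σ x ≠ x}) =
        σ.subtypePerm (fun x => (hinvσ x).symm) := by
      ext x
      simp only [Equiv.Perm.subtypePerm_apply, Equiv.Perm.mul_apply]
      rw [hτp x x.2]
    have e2 : ((σ * τ).subtypePerm (fun x => not_iff_not.mpr (hinvστ x).symm) :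
        Equiv.Perm {x // ¬ σ x ≠ x}) =
        τ.subtypePerm (fun x => not_iff_not.mpr (hinvτ x).symm) := by
      ext x
      simp only [Equiv.Perm.subtypePerm_apply, Equiv.Perm.mul_apply]
      by_cases hτx : τ (x : β) = (x : β)
      · rw [hτx]; exact not_not.mp x.2
      · exact hστ' x hτx
    have e3 : (σ.subtypePerm (fun x => not_iff_not.mpr (hinvσ x).symm) :
        Equiv.Perm {x // ¬ σ x ≠ x}) = 1 := by
      ext x
      exact not_not.mp x.2
    have e4 : (τ.subtypePerm (fun x => (hinvτ x).symm) : Equiv.Perm {x // σ x ≠ x}) = 1 := by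
      ext x
      exact hτp x x.2
    set A := (permPolyMat R (σ.subtypePerm (fun x => (hinvσ x).symm) : Equiv.Perm {x // σ x ≠ x})).det with hA
    set B := (permPolyMat R (τ.subtypePerm (fun x => not_iff_not.mpr (hinvτ x).symm) :
      Equiv.Perm {x // ¬ σ x ≠ x})).det with hB
    have hcard : Fintype.card {x // σ x ≠ x} = σ.support.card := by
      have hfs : (Finset.univ.filter fun x => σ x ≠ x) = σ.support := by
        ext x; simp [Equiv.Perm.mem_support]
      rw [Fintype.card_subtype, hfs]
    have hcard' : Fintype.card {x // ¬ σ x ≠ x} = Fintype.card β - σ.support.card := by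
      rw [Fintype.card_subtype_compl, hcard]
    have E1 : (permPolyMat R (σ * τ)).det = A * B := by
      rw [permPolyMat_split (R := R) (σ * τ) (fun x => σ x ≠ x) hinvστ, e1, e2]
    have E2 : (permPolyMat R σ).det = A * (1 - (X : R[X])) ^ (Fintype.card β - σ.support.card) := by
      rw [permPolyMat_split (R := R) σ (fun x => σ x ≠ x) hinvσ, e3, permPolyMat_one, hcard']
    have E3 : (permPolyMat R τ).det = (1 - (X : R[X])) ^ σ.support.card * B := by
      rw [permPolyMat_split (R := R) τ (fun x => σ x ≠ x) hinvτ, e4, permPolyMat_one, hcard]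
    -- numerology
    have hsum : (σ * τ).support.card = σ.support.card + τ.support.card :=
      hdisj.card_support_mul
    have hle : (σ * τ).support.card ≤ Fintype.card β := by
      rw [← Finset.card_univ]; exact Finset.card_le_univ _
    have fσ : (Finset.univ.filter fun x : β => σ x = x).card
        = Fintype.card β - σ.support.card := fixed_card σ
    have fτ : (Finset.univ.filter fun x : β => τ x = x).card
        = Fintype.card β - τ.support.card := fixed_card τ
    have fστ : (Finset.univ.filter fun x : β => (σ * τ) x = x).card
        = Fintype.card β - (σ * τ).support.card := fixed_card (σ * τ)
    set Fσ := (σ.cycleType.map fun ℓ => (1 : R[X]) - X ^ ℓ).prod with hFσ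
    set Fτ := (τ.cycleType.map fun ℓ => (1 : R[X]) - X ^ ℓ).prod with hFτ
    have hAFσ : A = Fσ := by
      apply cancel_one_sub_X_pow (Fintype.card β - σ.support.card)
      rw [← E2, ihσ, fσ, mul_comm]
    have hBFτ : B = (1 - (X : R[X])) ^ (Fintype.card β - (σ * τ).support.card) * Fτ := by
      apply cancel_one_sub_X_pow σ.support.card
      have hexp : Fintype.card β - τ.support.card
          = (Fintype.card β - (σ * τ).support.card) + σ.support.card := by omega
      calc B * (1 - (X : R[X])) ^ σ.support.card
          = (permPolyMat R τ).det := by rw [E3]; ring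
        _ = (1 - (X : R[X])) ^ (Fintype.card β - τ.support.card) * Fτ := by rw [ihτ, fτ]
        _ = ((1 - (X : R[X])) ^ (Fintype.card β - (σ * τ).support.card) * Fτ)
            * (1 - (X : R[X])) ^ σ.support.card := by rw [hexp, pow_add]; ring
    have hcycle : ((σ * τ).cycleType.map fun ℓ => (1 : R[X]) - X ^ ℓ).prod = Fσ * Fτ := by
      rw [Equiv.Perm.Disjoint.cycleType_mul hdisj, Multiset.map_add, Multiset.prod_add]
    rw [E1, hAFσ, hBFτ, fστ, hcycle]
    ring

end PermDet

lemma key_det2 {R : Type*} [CommRing R] {α : Type*} [Fintype α] [DecidableEq α]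
    (σ : Equiv.Perm α) :
    ((1 : Polynomial R) - Polynomial.X) ^ (Finset.univ.filter fun x : α => σ x = x).card *
        (σ.cycleType.map fun ℓ => (1 : Polynomial R) - Polynomial.X ^ ℓ).prod =
      ∏ j ∈ Finset.Icc 1 (Fintype.card α),
        ((1 : Polynomial R) - Polynomial.X ^ j) ^
          (if j = 1 then (Finset.univ.filter fun x : α => σ x = x).card
           else σ.cycleType.count j) := by
  classical
  set N := Fintype.card α with hNdef
  set f := (Finset.univ.filter fun x : α => σ x = x).card with hf
  set m := σ.cycleType with hm
  have hsub : m.toFinset ⊆ Finset.Icc 2 N := by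
    intro j hj
    rw [Finset.mem_Icc]
    have hjm := Multiset.mem_toFinset.mp hj
    refine ⟨Equiv.Perm.two_le_of_mem_cycleType hjm, ?_⟩
    calc j ≤ m.sum := Multiset.single_le_sum (fun x _ => Nat.zero_le x) j hjm
      _ = σ.support.card := σ.sum_cycleType
      _ ≤ N := by rw [hNdef, ← Finset.card_univ]; exact Finset.card_le_univ _
  have hprod : (m.map fun ℓ => (1 : R[X]) - X ^ ℓ).prod =
      ∏ j ∈ Finset.Icc 2 N, ((1 : R[X]) - X ^ j) ^ m.count j := by
    rw [Finset.prod_multiset_map_count]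
    refine Finset.prod_subset hsub (fun j _ hj => ?_)
    rw [Multiset.count_eq_zero_of_notMem (fun h => hj (Multiset.mem_toFinset.mpr h)), pow_zero]
  rcases Nat.eq_zero_or_pos N with hN | hN
  · have hα : IsEmpty α := Fintype.card_eq_zero_iff.mp hN
    have hσ1 : σ = 1 := Equiv.ext fun x => (hα.false x).elim
    have hf0 : f = 0 := by
      rw [hf, Finset.univ_eq_empty]
      simp
    have hm0 : m = 0 := by rw [hm, hσ1, Equiv.Perm.cycleType_one]
    rw [hf0, hm0, hN]
    simp
  · have h1n : (1 : ℕ) ∉ Finset.Icc 2 N := by simp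
    have hIcc : Finset.Icc 1 N = insert 1 (Finset.Icc 2 N) := by
      ext j
      simp only [Finset.mem_Icc, Finset.mem_insert]
      omega
    rw [hIcc, Finset.prod_insert h1n, if_pos rfl, pow_one]
    have hcongr : (∏ j ∈ Finset.Icc 2 N, ((1 : R[X]) - X ^ j) ^
        (if j = 1 then f else m.count j)) =
        ∏ j ∈ Finset.Icc 2 N, ((1 : R[X]) - X ^ j) ^ m.count j := by
      refine Finset.prod_congr rfl (fun j hj => ?_)
      have := (Finset.mem_Icc.mp hj).1
      rw [if_neg (by omega)]
    rw [hcongr, ← hprod]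

/-- For a permutation `σ` of a finite type with permutation matrix `P` over a commutative
ring `R`, one has `det (I - X • P) = (1 - X)^f * ∏_{ℓ ∈ cycleType σ} (1 - X^ℓ)` in `R[X]`,
where `f` is the number of fixed points of `σ`.  Equivalently, for cycle shape
`1^{a₁} 2^{a₂} ⋯ N^{a_N}` (fixed points counted as 1-cycles) it equals
`∏_j (1 - X^j)^{a_j}`. -/
theorem det_one_sub_X_smul_permMatrix {R : Type*} [CommRing R]
    {α : Type*} [Fintype α] [DecidableEq α]
    (σ : Equiv.Perm α) (P : Matrix α α R)
    (hP : ∀ i j : α, P i j = if σ j = i then 1 else 0) :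
    Matrix.det ((1 : Matrix α α (Polynomial R)) - (Polynomial.X : Polynomial R) • P.map Polynomial.C) =
      ((1 : Polynomial R) - Polynomial.X) ^ (Finset.univ.filter fun x : α => σ x = x).card *
        (σ.cycleType.map fun ℓ => (1 : Polynomial R) - Polynomial.X ^ ℓ).prod ∧
    Matrix.det ((1 : Matrix α α (Polynomial R)) - (Polynomial.X : Polynomial R) • P.map Polynomial.C) =
      ∏ j ∈ Finset.Icc 1 (Fintype.card α),
        ((1 : Polynomial R) - Polynomial.X ^ j) ^
          (if j = 1 then (Finset.univ.filter fun x : α => σ x = x).card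
           else σ.cycleType.count j) := by
  classical
  have hM : (1 : Matrix α α (Polynomial R)) - (Polynomial.X : Polynomial R) • P.map Polynomial.C
      = permPolyMat R σ := by
    refine Matrix.ext fun i j => ?_
    rw [permPolyMat_apply]
    simp only [Matrix.sub_apply, Matrix.smul_apply, Matrix.map_apply, Matrix.one_apply, hP,
      Matrix.of_apply, smul_eq_mul, apply_ite (Polynomial.C : R → R[X]), Polynomial.C_1, Polynomial.C_0]
  have h1 := key_det (R := R) σ
  rw [← hM] at h1
  exact ⟨h1, h1.trans (key_det2 σ)⟩
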